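/- Let k₊ > k₋ > 0, n := k₋/k₊, θc := arccos n ∈ (0,π/2), and θ_x ∈ (0, π/2). Set σ_{θx} := √k₊·min(sin((θc+θ_x)/2), cos((θc−θ_x)/2)), σ⁽¹⁾ := min(σ_{θx}, √k₊·sin((π−θc−θ_x)/2)) and σ⁽²⁾ := √k₊·|sin((θc−θ_x)/2)|. Then: (i) the function s ↦ H_{θc}(s)·H_{π−θc}(s)·√(s − s_b*) is complex differentiable on the strip L_{σ⁽¹⁾} := {s : |Im s| < σ⁽¹⁾}; (ii) the function s ↦ H_{θc}(s)·H_{π−θc}(s)·√(s − s_b*)·√(s − s_b) is complex differentiable on the strip L_{σ⁽²⁾} := {s : |Im s| < σ⁽²⁾}; (iii) min(√k₊·sin(θc/2), √k₊·sin(π/4 − θc/2)) ≤ σ⁽¹⁾ ≤ √k₊/√2 < √k₊, and in particular σ⁽¹⁾ > 0. -/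

import Mathlib

open Complex Set

noncomputable section

/-- Principal square root on ℂ via the principal power. -/
def csqrt (z : ℂ) : ℂ := z ^ (1/2 : ℂ)

def S1 (z : ℂ) : ℂ := Complex.exp (-(Real.pi : ℂ) / 4 * Complex.I) * csqrt (Complex.I * z)

def S2 (z : ℂ) : ℂ := Complex.exp ((Real.pi : ℂ) / 4 * Complex.I) * csqrt (-Complex.I * z)

def Sc (z : ℂ) (a : ℝ) : ℂ := S1 (z - (a : ℂ)) * S2 (z + (a : ℂ))

def Sct (z : ℂ) (a : ℝ) : ℂ := S2 (z - (a : ℂ)) * S2 (z + (a : ℂ))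

def Pf (kp : ℝ) (s : ℂ) : ℂ := csqrt (1 - s ^ 2 / (2 * (kp : ℂ) * Complex.I))

def Qf (kp : ℝ) (s : ℂ) : ℂ :=
  s * Complex.exp (-(Real.pi : ℂ) / 4 * Complex.I) / (Real.sqrt (2 * kp) : ℂ)

/-- Principal branch of arcsin on ℂ. -/
def arcsinC (w : ℂ) : ℂ := -Complex.I * Complex.log (Complex.I * w + csqrt (1 - w ^ 2))

def zetaF (kp θx : ℝ) (s : ℂ) : ℂ := 2 * arcsinC (Qf kp s) + (θx : ℂ)

def F1f (kp θx θ : ℝ) (s : ℂ) : ℂ :=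
  1 + Pf kp s * (Real.cos ((θ - θx) / 2) : ℂ) + Qf kp s * (Real.sin ((θ - θx) / 2) : ℂ)

def F2f (kp θx θ : ℝ) (s : ℂ) : ℂ :=
  Pf kp s * (Real.sin ((θ + θx) / 2) : ℂ) + Qf kp s * (Real.cos ((θ + θx) / 2) : ℂ)

def F3f (kp θx θ : ℝ) (s : ℂ) : ℂ := (Real.cos ((θ - θx) / 2) : ℂ) + Pf kp s

def Hth (kp θx θ : ℝ) (s : ℂ) : ℂ :=
  csqrt (F1f kp θx θ s) * csqrt (F2f kp θx θ s) / csqrt (F3f kp θx θ s)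

def sb (kp θc θx : ℝ) : ℂ :=
  (Real.sqrt (2 * kp) : ℂ) * Complex.exp ((Real.pi : ℂ) / 4 * Complex.I) *
    (Real.sin ((θc - θx) / 2) : ℂ)

def sbs (kp θc θx : ℝ) : ℂ :=
  (Real.sqrt (2 * kp) : ℂ) * Complex.exp ((Real.pi : ℂ) / 4 * Complex.I) *
    (Real.sin ((Real.pi - θc - θx) / 2) : ℂ)

/- ===== auxiliary lemmas ===== -/

lemma csqrt_re_nonneg (z : ℂ) : 0 ≤ (csqrt z).re := by
  rcases eq_or_ne z 0 with rfl | hz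
  · simp [csqrt, Complex.zero_cpow (by norm_num : (1/2:ℂ) ≠ 0)]
  · rw [csqrt, Complex.cpow_def_of_ne_zero hz, Complex.exp_re]
    have him : (Complex.log z * (1/2)).im = z.arg / 2 := by
      simp [Complex.mul_im, Complex.log_im]; ring
    rw [him]
    have h1 : -(Real.pi/2) ≤ z.arg / 2 := by
      have := Complex.neg_pi_lt_arg z; linarith
    have h2 : z.arg / 2 ≤ Real.pi/2 := by
      have := Complex.arg_le_pi z; linarith
    exact mul_nonneg (Real.exp_pos _).le
      (Real.cos_nonneg_of_mem_Icc ⟨h1, h2⟩)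

lemma csqrt_mul_self (z : ℂ) : csqrt z * csqrt z = z := by
  rcases eq_or_ne z 0 with rfl | hz
  · simp [csqrt, Complex.zero_cpow (by norm_num : (1/2:ℂ) ≠ 0)]
  · rw [csqrt, ← Complex.cpow_add _ _ hz]
    norm_num

lemma csqrt_sq' (z : ℂ) : csqrt z ^ 2 = z := by
  rw [sq, csqrt_mul_self]

lemma csqrt_ne_zero {z : ℂ} (hz : z ≠ 0) : csqrt z ≠ 0 := by
  intro h
  apply hz
  rw [← csqrt_mul_self z, h, mul_zero]

lemma DifferentiableAt.csqrt' {f : ℂ → ℂ} {x : ℂ} (hf : DifferentiableAt ℂ f x)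
    (h : f x ∈ Complex.slitPlane) : DifferentiableAt ℂ (fun z => csqrt (f z)) x := by
  simp only [csqrt]
  exact hf.cpow (differentiableAt_const _) h

lemma re_eq_zero_of_sq_nonpos {w : ℂ} {c : ℝ} (h : w ^ 2 = (c : ℂ)) (hc : c ≤ 0) : w.re = 0 := by
  have h1 : (w^2).im = 0 := by rw [h]; simp
  have h2 : (w^2).re = c := by rw [h]; simp
  simp only [sq, Complex.mul_im, Complex.mul_re] at h1 h2
  have h3 : w.re * w.im = 0 := by linarith
  rcases mul_eq_zero.mp h3 with h4 | h4
  · exact h4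
  · nlinarith [sq_nonneg w.re]

lemma im_eq_zero_of_sq_real {w : ℂ} {c : ℝ} (h : w ^ 2 = (c : ℂ)) (hw : w.re ≠ 0) : w.im = 0 := by
  have h1 : (w^2).im = 0 := by rw [h]; simp
  simp only [sq, Complex.mul_im] at h1
  have h3 : w.re * w.im = 0 := by linarith
  rcases mul_eq_zero.mp h3 with h4 | h4
  · exact absurd h4 hw
  · exact h4

lemma F1_slit_abs (P Q : ℂ) (ca sa : ℝ) (hca : 0 < ca) (h1 : sa^2 + ca^2 = 1)
    (hP : 0 ≤ P.re) (hPQ : P^2 = 1 - Q^2) :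
    1 + P * (ca:ℂ) + Q * (sa:ℂ) ∈ Complex.slitPlane := by
  rw [Complex.mem_slitPlane_iff]
  by_contra h
  push_neg at h
  obtain ⟨hre, him⟩ := h
  set F := 1 + P * (ca:ℂ) + Q * (sa:ℂ) with hF
  set r : ℝ := 1 - F.re with hr
  have hr1 : 1 ≤ r := by simp only [hr]; linarith
  have hFeq : F = ((F.re : ℝ) : ℂ) := Complex.ext (by simp) (by simp [him])
  have h1C : (sa:ℂ)^2 + (ca:ℂ)^2 = 1 := by exact_mod_cast congrArg (Complex.ofReal) h1
  have hPc : P * (ca:ℂ) = -(r:ℂ) - Q * (sa:ℂ) := by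
    rw [hr]; push_cast
    rw [hF] at hFeq
    linear_combination hFeq
  have hsq : (P * (ca:ℂ))^2 = (-(r:ℂ) - Q * (sa:ℂ))^2 := by rw [hPc]
  have hw : (Q + ((r*sa : ℝ):ℂ))^2 = ((ca^2*(1-r^2) : ℝ):ℂ) := by
    push_cast
    linear_combination (-1 : ℂ) * hsq + (ca:ℂ)^2 * hPQ - (Q^2 - (r:ℂ)^2) * h1C
  have hc : ca^2*(1-r^2) ≤ 0 := by
    have h5 : 1 - r^2 ≤ 0 := by nlinarith
    exact mul_nonpos_of_nonneg_of_nonpos (sq_nonneg ca) h5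
  have hwre : (Q + ((r*sa : ℝ):ℂ)).re = 0 := re_eq_zero_of_sq_nonpos hw hc
  have hQre : Q.re = -(r * sa) := by
    simp [Complex.add_re] at hwre; linarith
  have hPre : P.re * ca = -r - Q.re * sa := by
    have := congrArg Complex.re hPc
    simpa [Complex.mul_re, Complex.sub_re, Complex.neg_re] using this
  rw [hQre] at hPre
  nlinarith [mul_nonneg hP hca.le]

lemma F2_slit_abs (P Q : ℂ) (sb cb : ℝ) (hsb : 0 < sb) (h1 : sb^2 + cb^2 = 1)
    (hP : 0 ≤ P.re) (hPQ : P^2 = 1 - Q^2) (hQr : Q.im = 0 → |Q.re| < sb) :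
    P * (sb:ℂ) + Q * (cb:ℂ) ∈ Complex.slitPlane := by
  rw [Complex.mem_slitPlane_iff]
  by_contra h
  push_neg at h
  obtain ⟨hre, him⟩ := h
  set F := P * (sb:ℂ) + Q * (cb:ℂ) with hF
  set t : ℝ := -F.re with ht
  have ht0 : 0 ≤ t := by simp only [ht]; linarith
  have hFeq : F = ((F.re : ℝ) : ℂ) := Complex.ext (by simp) (by simp [him])
  have h1C : (sb:ℂ)^2 + (cb:ℂ)^2 = 1 := by exact_mod_cast congrArg (Complex.ofReal) h1
  have hPc : P * (sb:ℂ) = -(t:ℂ) - Q * (cb:ℂ) := by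
    rw [ht]; push_cast
    rw [hF] at hFeq
    linear_combination hFeq
  have hsq : (P * (sb:ℂ))^2 = (-(t:ℂ) - Q * (cb:ℂ))^2 := by rw [hPc]
  have hw : (Q + ((t*cb : ℝ):ℂ))^2 = ((sb^2*(1-t^2) : ℝ):ℂ) := by
    push_cast
    linear_combination (-1 : ℂ) * hsq + (sb:ℂ)^2 * hPQ - (Q^2 - (t:ℂ)^2) * h1C
  by_cases hwre : (Q + ((t*cb : ℝ):ℂ)).re = 0
  · have him2 : ((Q + ((t*cb:ℝ):ℂ))^2).re = sb^2*(1-t^2) := by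
      rw [hw]; exact Complex.ofReal_re _
    have hc : sb^2*(1-t^2) ≤ 0 := by
      simp only [sq, Complex.mul_re] at him2
      rw [hwre] at him2
      nlinarith [sq_nonneg (Q + ((t*cb:ℝ):ℂ)).im]
    have hsb2 : 0 < sb^2 := by positivity
    have ht2 : 1 - t^2 ≤ 0 := by nlinarith
    have ht1 : 1 ≤ t := by nlinarith
    have hQre : Q.re = -(t * cb) := by
      simp [Complex.add_re] at hwre; linarith
    have hPre : P.re * sb = -t - Q.re * cb := by
      have := congrArg Complex.re hPc
      simpa [Complex.mul_re, Complex.sub_re, Complex.neg_re] using this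
    rw [hQre] at hPre
    nlinarith [mul_nonneg hP hsb.le]
  · have hwim : (Q + ((t*cb : ℝ):ℂ)).im = 0 := im_eq_zero_of_sq_real hw hwre
    have hQim : Q.im = 0 := by simpa [Complex.add_im] using hwim
    have hQabs : |Q.re| < sb := hQr hQim
    have hQC : Q = ((Q.re : ℝ) : ℂ) := Complex.ext (by simp) (by simp [hQim])
    have hP2 : P^2 = ((1 - Q.re^2 : ℝ) : ℂ) := by
      rw [hPQ]; push_cast
      linear_combination (-(Q + (Q.re:ℂ))) * hQC
    have hQsq : Q.re^2 < sb^2 := by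
      nlinarith [_root_.sq_abs Q.re, mul_lt_mul'' hQabs hQabs (abs_nonneg _) (abs_nonneg _)]
    have hQ1 : Q.re^2 < 1 := by nlinarith [sq_nonneg cb]
    have hre2 : (P^2).re = 1 - Q.re^2 := by rw [hP2]; exact Complex.ofReal_re _
    simp only [sq, Complex.mul_re] at hre2
    have hPim : P.im = 0 := by
      rcases mul_eq_zero.mp (by
        have him3 : (P^2).im = 0 := by rw [hP2]; exact Complex.ofReal_im _
        simp only [sq, Complex.mul_im] at him3
        linarith : P.re * P.im = 0) with h4 | h4
      · exfalso; rw [h4] at hre2; nlinarith [sq_nonneg P.im]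
      · exact h4
    rw [hPim] at hre2
    have hPre2 : P.re * P.re = 1 - Q.re^2 := by linarith
    have hFre : P.re * sb + Q.re * cb ≤ 0 := by
      have hh : F.re = P.re * sb + Q.re * cb := by
        simp [hF, Complex.add_re, Complex.mul_re]
      linarith
    have hPpos : 0 < P.re := by
      rcases hP.lt_or_eq with h' | h'
      · exact h'
      · exfalso; rw [← h'] at hPre2; nlinarith
    have hb : 0 < P.re*sb := mul_pos hPpos hsb
    have ha : Q.re*cb ≤ -(P.re*sb) := by linarith
    have key : (P.re*sb)^2 ≤ (Q.re*cb)^2 := by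
      nlinarith [mul_nonneg (by linarith : (0:ℝ) ≤ P.re*sb - Q.re*cb)
        (by linarith : (0:ℝ) ≤ -(Q.re*cb) - P.re*sb)]
    have e1 : (P.re*sb)^2 = (1 - Q.re^2)*sb^2 := by rw [mul_pow, sq, hPre2]
    rw [e1, mul_pow] at key
    nlinarith [key, hQsq, h1]

lemma exp_neg_pi4 : Complex.exp (-(Real.pi : ℂ) / 4 * Complex.I)
    = ((Real.sqrt 2 / 2 : ℝ) : ℂ) * (1 - Complex.I) := by
  have h : (-(Real.pi : ℂ) / 4) = (((-(Real.pi/4)) : ℝ) : ℂ) := by push_cast; ring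
  rw [h, Complex.exp_mul_I, ← Complex.ofReal_cos, ← Complex.ofReal_sin]
  rw [Real.cos_neg, Real.sin_neg, Real.cos_pi_div_four, Real.sin_pi_div_four]
  push_cast; ring

lemma exp_pi4 : Complex.exp ((Real.pi : ℂ) / 4 * Complex.I)
    = ((Real.sqrt 2 / 2 : ℝ) : ℂ) * (1 + Complex.I) := by
  have h : ((Real.pi : ℂ) / 4) = (((Real.pi/4) : ℝ) : ℂ) := by push_cast; ring
  rw [h, Complex.exp_mul_I, ← Complex.ofReal_cos, ← Complex.ofReal_sin]
  rw [Real.cos_pi_div_four, Real.sin_pi_div_four]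
  push_cast; ring

lemma Qf_eq (kp : ℝ) (hk : 0 < kp) (s : ℂ) :
    Qf kp s = s * (1 - Complex.I) / ((2 * Real.sqrt kp : ℝ) : ℂ) := by
  rw [Qf, exp_neg_pi4]
  have h2 : Real.sqrt (2 * kp) = Real.sqrt 2 * Real.sqrt kp := Real.sqrt_mul (by norm_num) _
  rw [h2]
  have hskne : (Real.sqrt kp : ℝ) ≠ 0 := Real.sqrt_ne_zero'.mpr hk
  have hs2ne : (Real.sqrt 2 : ℝ) ≠ 0 := Real.sqrt_ne_zero'.mpr (by norm_num)
  have hd1 : ((Real.sqrt 2 * Real.sqrt kp : ℝ) : ℂ) ≠ 0 := by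
    exact_mod_cast mul_ne_zero hs2ne hskne
  have hd2 : ((2 * Real.sqrt kp : ℝ) : ℂ) ≠ 0 := by
    exact_mod_cast mul_ne_zero (two_ne_zero) hskne
  rw [div_eq_div_iff hd1 hd2]
  push_cast
  ring

lemma Qf_re (kp : ℝ) (hk : 0 < kp) (s : ℂ) :
    (Qf kp s).re = (s.re + s.im) / (2 * Real.sqrt kp) := by
  rw [Qf_eq kp hk s, Complex.div_ofReal_re]
  congr 1
  simp [Complex.sub_re, Complex.mul_re, Complex.mul_im, Complex.I_re, Complex.I_im]

lemma Qf_im (kp : ℝ) (hk : 0 < kp) (s : ℂ) :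
    (Qf kp s).im = (s.im - s.re) / (2 * Real.sqrt kp) := by
  rw [Qf_eq kp hk s, Complex.div_ofReal_im]
  congr 1
  simp [Complex.sub_im, Complex.mul_re, Complex.mul_im, Complex.I_re, Complex.I_im]
  ring

lemma Qf_real_bound (kp : ℝ) (hk : 0 < kp) (s : ℂ) (b : ℝ)
    (hs : |s.im| < Real.sqrt kp * b) (hQ : (Qf kp s).im = 0) : |(Qf kp s).re| < b := by
  have hsk : 0 < Real.sqrt kp := Real.sqrt_pos.mpr hk
  rw [Qf_im kp hk s] at hQ
  have hre : s.re = s.im := by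
    field_simp at hQ; linarith
  rw [Qf_re kp hk s, hre]
  rw [abs_div]
  rw [abs_of_pos (by positivity : (0:ℝ) < 2 * Real.sqrt kp)]
  rw [div_lt_iff₀ (by positivity)]
  have : |s.im + s.im| = 2 * |s.im| := by rw [← two_mul, abs_mul]; norm_num
  rw [this]
  nlinarith [hs, hsk]

lemma Pf_inner_rw (kp : ℝ) (hk : 0 < kp) (s : ℂ) :
    1 - s ^ 2 / (2 * (kp : ℂ) * Complex.I) = 1 + s^2 * Complex.I / ((2*kp : ℝ):ℂ) := by
  have hkne : ((kp:ℝ):ℂ) ≠ 0 := Complex.ofReal_ne_zero.mpr hk.ne'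
  have h2k : ((2*kp : ℝ):ℂ) ≠ 0 := by push_cast; simp [hkne]
  field_simp
  push_cast
  linear_combination (-2*(kp:ℂ)*s^2) * Complex.I_sq

lemma Pf_inner_slit (kp : ℝ) (hk : 0 < kp) (s : ℂ) (hs : |s.im| < Real.sqrt kp) :
    1 - s ^ 2 / (2 * (kp : ℂ) * Complex.I) ∈ Complex.slitPlane := by
  rw [Pf_inner_rw kp hk s]
  rw [Complex.mem_slitPlane_iff]
  by_contra h
  push_neg at h
  obtain ⟨hre, him⟩ := h
  have h2k : (0:ℝ) < 2*kp := by linarith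
  have e1 : (1 + s^2 * Complex.I / ((2*kp:ℝ):ℂ)).re = 1 + (-(2*(s.re*s.im)))/(2*kp) := by
    rw [Complex.add_re, Complex.div_ofReal_re, Complex.one_re, Complex.mul_I_re]
    congr 2
    simp [sq, Complex.mul_im]; ring
  have e2 : (1 + s^2 * Complex.I / ((2*kp:ℝ):ℂ)).im = (s.re*s.re - s.im*s.im)/(2*kp) := by
    rw [Complex.add_im, Complex.div_ofReal_im, Complex.one_im, Complex.mul_I_im]
    rw [zero_add]
    congr 1
    simp [sq, Complex.mul_re]
  rw [e1] at hre
  rw [e2] at him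
  have hsq : s.re*s.re = s.im*s.im := by
    field_simp at him; linarith
  have h5 : 1 ≤ (2*(s.re*s.im))/(2*kp) := by rw [neg_div] at hre; linarith
  have h6 : 2*kp ≤ 2*(s.re*s.im) := by rw [le_div_iff₀ h2k] at h5; linarith
  have hprod : kp ≤ s.re*s.im := by linarith
  have him3 : s.im^2 < kp := by
    nlinarith [Real.sq_sqrt hk.le, Real.sqrt_nonneg kp, _root_.sq_abs s.im,
      abs_nonneg s.im, mul_lt_mul'' hs hs (abs_nonneg _) (abs_nonneg _)]
  nlinarith [sq_nonneg (s.re - s.im), sq_nonneg (s.re + s.im)]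

lemma Pf_sq (kp : ℝ) (hk : 0 < kp) (s : ℂ) : Pf kp s ^ 2 = 1 - Qf kp s ^ 2 := by
  rw [Pf, csqrt_sq', Qf_eq kp hk s, Pf_inner_rw kp hk s]
  have hskne : (Real.sqrt kp : ℝ) ≠ 0 := Real.sqrt_ne_zero'.mpr hk
  have hskq : ((Real.sqrt kp : ℝ) : ℂ)^2 = ((kp:ℝ):ℂ) := by
    rw [← Complex.ofReal_pow, Real.sq_sqrt hk.le]
  have h2k : ((2*kp : ℝ):ℂ) ≠ 0 := by
    push_cast; exact mul_ne_zero two_ne_zero (Complex.ofReal_ne_zero.mpr hk.ne')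
  have h4k : ((4*kp : ℝ):ℂ) ≠ 0 := by
    push_cast
    exact mul_ne_zero (by norm_num) (Complex.ofReal_ne_zero.mpr hk.ne')
  have hden : (((2 * Real.sqrt kp : ℝ)):ℂ)^2 = ((4*kp : ℝ):ℂ) := by
    push_cast; linear_combination (4:ℂ) * hskq
  have key : s^2*Complex.I/((2*kp:ℝ):ℂ) = -(s^2*(1-Complex.I)^2)/((4*kp:ℝ):ℂ) := by
    rw [div_eq_div_iff h2k h4k]
    push_cast
    linear_combination (2*(kp:ℂ)*s^2) * Complex.I_sq
  rw [div_pow, hden, mul_pow, key]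
  ring

lemma Qf_diff (kp : ℝ) (s : ℂ) : DifferentiableAt ℂ (Qf kp) s := by
  unfold Qf
  fun_prop

lemma Pf_diff (kp : ℝ) (hk : 0 < kp) (s : ℂ) (hs : |s.im| < Real.sqrt kp) :
    DifferentiableAt ℂ (Pf kp) s := by
  unfold Pf csqrt
  apply DifferentiableAt.cpow
  · fun_prop
  · fun_prop
  · exact Pf_inner_slit kp hk s hs

lemma sin_le_sin' {a b : ℝ} (h0 : 0 ≤ a) (hab : a ≤ b) (hb : b ≤ Real.pi/2) :
    Real.sin a ≤ Real.sin b := by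
  have hpi := Real.pi_pos
  exact Real.strictMonoOn_sin.monotoneOn ⟨by linarith, by linarith⟩ ⟨by linarith, hb⟩ hab

lemma cos_le_cos' {a b : ℝ} (h0 : 0 ≤ a) (hab : a ≤ b) (hb : b ≤ Real.pi) :
    Real.cos b ≤ Real.cos a := by
  exact Real.strictAntiOn_cos.antitoneOn ⟨h0, by linarith⟩ ⟨by linarith, hb⟩ hab

lemma F3_ne (kp θx θ : ℝ) (s : ℂ) (hca : 0 < Real.cos ((θ-θx)/2)) :
    0 < (F3f kp θx θ s).re := by
  rw [F3f, Complex.add_re, Complex.ofReal_re]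
  have := csqrt_re_nonneg (1 - s ^ 2 / (2 * (kp : ℂ) * Complex.I))
  rw [Pf]
  linarith

lemma Hth_diffAt (kp θx θ : ℝ) (hkp : 0 < kp) (s : ℂ)
    (hca : 0 < Real.cos ((θ-θx)/2)) (hsbv : 0 < Real.sin ((θ+θx)/2))
    (hstrip : |s.im| < Real.sqrt kp)
    (hQb : |s.im| < Real.sqrt kp * Real.sin ((θ+θx)/2)) :
    DifferentiableAt ℂ (Hth kp θx θ) s := by
  have hPre : 0 ≤ (Pf kp s).re := csqrt_re_nonneg _
  have hPQ : Pf kp s ^ 2 = 1 - Qf kp s ^ 2 := Pf_sq kp hkp s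
  have hPd : DifferentiableAt ℂ (Pf kp) s := Pf_diff kp hkp s hstrip
  have hQd : DifferentiableAt ℂ (Qf kp) s := Qf_diff kp s
  have hF1d : DifferentiableAt ℂ (F1f kp θx θ) s := by
    unfold F1f
    exact ((differentiableAt_const _).add (hPd.mul_const _)).add (hQd.mul_const _)
  have hF2d : DifferentiableAt ℂ (F2f kp θx θ) s := by
    unfold F2f
    exact (hPd.mul_const _).add (hQd.mul_const _)
  have hF3d : DifferentiableAt ℂ (F3f kp θx θ) s := by
    unfold F3f
    exact (differentiableAt_const _).add hPd
  have hF1s : F1f kp θx θ s ∈ Complex.slitPlane := by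
    rw [F1f]
    exact F1_slit_abs (Pf kp s) (Qf kp s) _ _ hca (Real.sin_sq_add_cos_sq _) hPre hPQ
  have hF2s : F2f kp θx θ s ∈ Complex.slitPlane := by
    rw [F2f]
    exact F2_slit_abs (Pf kp s) (Qf kp s) _ _ hsbv (Real.sin_sq_add_cos_sq _) hPre hPQ
      (Qf_real_bound kp hkp s _ hQb)
  have hF3s : F3f kp θx θ s ∈ Complex.slitPlane := by
    rw [Complex.mem_slitPlane_iff]
    exact Or.inl (F3_ne kp θx θ s hca)
  have hF3ne : csqrt (F3f kp θx θ s) ≠ 0 := by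
    apply csqrt_ne_zero
    intro h
    have := F3_ne kp θx θ s hca
    rw [h] at this
    simp at this
  unfold Hth
  exact ((hF1d.csqrt' hF1s).mul (hF2d.csqrt' hF2s)).div (hF3d.csqrt' hF3s) hF3ne

lemma sb_im (kp θc θx : ℝ) (hk : 0 < kp) :
    (sb kp θc θx).im = Real.sqrt kp * Real.sin ((θc - θx) / 2) := by
  rw [sb, exp_pi4]
  set v := Real.sin ((θc - θx) / 2) with hv
  have h2 : Real.sqrt (2 * kp) = Real.sqrt 2 * Real.sqrt kp := Real.sqrt_mul (by norm_num) _
  have h22 : Real.sqrt 2 * Real.sqrt 2 = 2 := Real.mul_self_sqrt (by norm_num)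
  simp [Complex.mul_im, Complex.mul_re, Complex.I_re, Complex.I_im, h2]
  left
  linear_combination (Real.sqrt kp / 2) * h22

lemma sbs_im (kp θc θx : ℝ) (hk : 0 < kp) :
    (sbs kp θc θx).im = Real.sqrt kp * Real.sin ((Real.pi - θc - θx) / 2) := by
  rw [sbs, exp_pi4]
  set v := Real.sin ((Real.pi - θc - θx) / 2) with hv
  have h2 : Real.sqrt (2 * kp) = Real.sqrt 2 * Real.sqrt kp := Real.sqrt_mul (by norm_num) _
  have h22 : Real.sqrt 2 * Real.sqrt 2 = 2 := Real.mul_self_sqrt (by norm_num)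
  simp [Complex.mul_im, Complex.mul_re, Complex.I_re, Complex.I_im, h2]
  left
  linear_combination (Real.sqrt kp / 2) * h22

lemma abs_sin_eq {d : ℝ} (h : |d| ≤ Real.pi) : |Real.sin d| = Real.sin |d| := by
  rcases le_or_gt 0 d with h0 | h0
  · rw [_root_.abs_of_nonneg h0] at h ⊢
    rw [_root_.abs_of_nonneg (Real.sin_nonneg_of_nonneg_of_le_pi h0 h)]
  · rw [abs_of_neg h0] at h ⊢
    have h5 : 0 ≤ Real.sin (-d) := Real.sin_nonneg_of_nonneg_of_le_pi (by linarith) h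
    rw [Real.sin_neg] at h5
    rw [_root_.abs_of_nonpos (by linarith), Real.sin_neg]

theorem statement19 (kp km : ℝ) (hkm : 0 < km) (hk : km < kp) (θx : ℝ)
    (hθ : θx ∈ Set.Ioo 0 (Real.pi / 2)) :
    let θc := Real.arccos (km / kp)
    let σθx := Real.sqrt kp * min (Real.sin ((θc + θx) / 2)) (Real.cos ((θc - θx) / 2))
    let σ1 := min σθx (Real.sqrt kp * Real.sin ((Real.pi - θc - θx) / 2))
    let σ2 := Real.sqrt kp * |Real.sin ((θc - θx) / 2)|
    DifferentiableOn ℂ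
        (fun s => Hth kp θx θc s * Hth kp θx (Real.pi - θc) s * csqrt (s - sbs kp θc θx))
        {s : ℂ | |s.im| < σ1} ∧
    DifferentiableOn ℂ
        (fun s => Hth kp θx θc s * Hth kp θx (Real.pi - θc) s * csqrt (s - sbs kp θc θx) *
          csqrt (s - sb kp θc θx))
        {s : ℂ | |s.im| < σ2} ∧
    min (Real.sqrt kp * Real.sin (θc / 2)) (Real.sqrt kp * Real.sin (Real.pi / 4 - θc / 2)) ≤ σ1 ∧
    σ1 ≤ Real.sqrt kp / Real.sqrt 2 ∧
    Real.sqrt kp / Real.sqrt 2 < Real.sqrt kp ∧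
    0 < σ1 := by
  obtain ⟨hθx1, hθx2⟩ := hθ
  intro θc σθx σ1 σ2
  have hkp : 0 < kp := hkm.trans hk
  have hsk : 0 < Real.sqrt kp := Real.sqrt_pos.mpr hkp
  have hpi := Real.pi_pos
  have hθc1 : 0 < θc := Real.arccos_pos.mpr ((div_lt_one hkp).mpr hk)
  have hθc2 : θc < Real.pi/2 := Real.arccos_lt_pi_div_two.mpr (div_pos hkm hkp)
  have h22 : Real.sqrt 2 * Real.sqrt 2 = 2 := Real.mul_self_sqrt (by norm_num)
  have hs2 : (1:ℝ) < Real.sqrt 2 := by nlinarith [Real.sqrt_nonneg 2]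
  -- trig positivity
  have hsin_u : 0 < Real.sin ((θc+θx)/2) :=
    Real.sin_pos_of_pos_of_lt_pi (by linarith) (by linarith)
  have hcos_d : 0 < Real.cos ((θc-θx)/2) :=
    Real.cos_pos_of_mem_Ioo ⟨by linarith, by linarith⟩
  have hcos_u : 0 < Real.cos ((θc+θx)/2) :=
    Real.cos_pos_of_mem_Ioo ⟨by linarith, by linarith⟩
  have hang1 : (Real.pi-θc-θx)/2 = Real.pi/2 - (θc+θx)/2 := by ring
  have hsbs_pos : 0 < Real.sin ((Real.pi-θc-θx)/2) := by
    rw [hang1, Real.sin_pi_div_two_sub]; exact hcos_u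
  -- sigma1 component bounds
  have hσ1_le1 : σ1 ≤ Real.sqrt kp * Real.sin ((θc+θx)/2) :=
    (min_le_left _ _).trans (mul_le_mul_of_nonneg_left (min_le_left _ _) hsk.le)
  have hσ1_le2 : σ1 ≤ Real.sqrt kp * Real.cos ((θc-θx)/2) :=
    (min_le_left _ _).trans (mul_le_mul_of_nonneg_left (min_le_right _ _) hsk.le)
  have hσ1_le3 : σ1 ≤ Real.sqrt kp * Real.sin ((Real.pi-θc-θx)/2) := min_le_right _ _
  -- (iv)
  have hhalf : Real.sqrt kp / Real.sqrt 2 = Real.sqrt kp * (Real.sqrt 2 / 2) := by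
    rw [div_eq_iff (by positivity : Real.sqrt 2 ≠ 0)]
    ring_nf
    nlinarith [h22]
  have hiv : σ1 ≤ Real.sqrt kp / Real.sqrt 2 := by
    rw [hhalf]
    rcases le_total ((θc+θx)/2) (Real.pi/4) with hc | hc
    · refine hσ1_le1.trans (mul_le_mul_of_nonneg_left ?_ hsk.le)
      have := sin_le_sin' (by linarith : (0:ℝ) ≤ (θc+θx)/2) hc (by linarith)
      rwa [Real.sin_pi_div_four] at this
    · refine hσ1_le3.trans (mul_le_mul_of_nonneg_left ?_ hsk.le)
      rw [hang1, Real.sin_pi_div_two_sub]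
      have := cos_le_cos' (by linarith : (0:ℝ) ≤ Real.pi/4) hc (by linarith)
      rwa [Real.cos_pi_div_four] at this
  -- (v)
  have hv : Real.sqrt kp / Real.sqrt 2 < Real.sqrt kp := div_lt_self hsk hs2
  -- (vi)
  have hvi : 0 < σ1 :=
    lt_min (mul_pos hsk (lt_min hsin_u hcos_d)) (mul_pos hsk hsbs_pos)
  -- |d| ≤ π/4
  have habs_d : |(θc-θx)/2| ≤ Real.pi/4 := abs_le.mpr ⟨by linarith, by linarith⟩
  have hcos_ge : Real.sqrt 2 / 2 ≤ Real.cos ((θc-θx)/2) := by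
    rw [← Real.cos_pi_div_four, ← Real.cos_abs ((θc-θx)/2)]
    exact cos_le_cos' (abs_nonneg _) habs_d (by linarith)
  -- (iii)
  have hiii : min (Real.sqrt kp * Real.sin (θc / 2))
      (Real.sqrt kp * Real.sin (Real.pi / 4 - θc / 2)) ≤ σ1 := by
    apply le_min
    · refine (min_le_left _ _).trans (mul_le_mul_of_nonneg_left (le_min ?_ ?_) hsk.le)
      · exact sin_le_sin' (by linarith) (by linarith) (by linarith)
      · have l1 : Real.sin (θc/2) ≤ Real.sqrt 2/2 := by
          have := sin_le_sin' (by linarith : (0:ℝ) ≤ θc/2) (by linarith : θc/2 ≤ Real.pi/4)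
            (by linarith)
          rwa [Real.sin_pi_div_four] at this
        linarith
    · refine (min_le_right _ _).trans (mul_le_mul_of_nonneg_left ?_ hsk.le)
      exact sin_le_sin' (by linarith) (by linarith) (by linarith)
  -- σ2 ≤ σ1
  have habs_sin : |Real.sin ((θc-θx)/2)| = Real.sin |(θc-θx)/2| :=
    abs_sin_eq (by linarith [abs_le.mp habs_d])
  have hσ2_1 : Real.sin |(θc-θx)/2| ≤ Real.sin ((θc+θx)/2) := by
    apply sin_le_sin' (abs_nonneg _) ?_ (by linarith)
    exact abs_le.mpr ⟨by linarith, by linarith⟩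
  have hσ2_2 : Real.sin |(θc-θx)/2| ≤ Real.cos ((θc-θx)/2) := by
    have l1 : Real.sin |(θc-θx)/2| ≤ Real.sqrt 2/2 := by
      have := sin_le_sin' (abs_nonneg _) habs_d (by linarith)
      rwa [Real.sin_pi_div_four] at this
    linarith
  have hσ2_3 : Real.sin |(θc-θx)/2| ≤ Real.sin ((Real.pi-θc-θx)/2) := by
    apply sin_le_sin' (abs_nonneg _) ?_ (by linarith)
    exact abs_le.mpr ⟨by linarith, by linarith⟩
  have hσ21 : σ2 ≤ σ1 := by
    apply le_min
    · refine mul_le_mul_of_nonneg_left ?_ hsk.le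
      rw [habs_sin]
      exact le_min hσ2_1 hσ2_2
    · refine mul_le_mul_of_nonneg_left ?_ hsk.le
      rw [habs_sin]
      exact hσ2_3
  -- key differentiability on strip σ1
  have key1 : ∀ s : ℂ, |s.im| < σ1 → DifferentiableAt ℂ
      (fun s => Hth kp θx θc s * Hth kp θx (Real.pi - θc) s * csqrt (s - sbs kp θc θx)) s := by
    intro s hs
    have hstrip : |s.im| < Real.sqrt kp := hs.trans_le (hiv.trans hv.le)
    have hH1 : DifferentiableAt ℂ (Hth kp θx θc) s :=
      Hth_diffAt kp θx θc hkp s hcos_d hsin_u hstrip (hs.trans_le hσ1_le1)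
    have hang2 : ((Real.pi - θc) - θx)/2 = Real.pi/2 - (θc+θx)/2 := by ring
    have hang3 : ((Real.pi - θc) + θx)/2 = Real.pi/2 - (θc-θx)/2 := by ring
    have hH2 : DifferentiableAt ℂ (Hth kp θx (Real.pi - θc)) s := by
      apply Hth_diffAt kp θx _ hkp s ?_ ?_ hstrip ?_
      · rw [hang2, Real.cos_pi_div_two_sub]; exact hsin_u
      · rw [hang3, Real.sin_pi_div_two_sub]; exact hcos_d
      · rw [hang3, Real.sin_pi_div_two_sub]; exact hs.trans_le hσ1_le2
    have hsbsd : DifferentiableAt ℂ (fun s : ℂ => csqrt (s - sbs kp θc θx)) s := by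
      apply DifferentiableAt.csqrt' (differentiableAt_id.sub (differentiableAt_const _))
      rw [Complex.mem_slitPlane_iff]
      right
      show (s - sbs kp θc θx).im ≠ 0
      rw [Complex.sub_im, sbs_im kp θc θx hkp]
      have h6 : s.im < Real.sqrt kp * Real.sin ((Real.pi-θc-θx)/2) :=
        (le_abs_self _).trans_lt (hs.trans_le hσ1_le3)
      exact sub_ne_zero_of_ne (ne_of_lt h6)
    exact (hH1.mul hH2).mul hsbsd
  refine ⟨?_, ?_, hiii, hiv, hv, hvi⟩
  · intro s hs
    exact (key1 s hs).differentiableWithinAt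
  · intro s hs
    simp only [Set.mem_setOf_eq] at hs
    have hs1 : |s.im| < σ1 := hs.trans_le hσ21
    have hsbd : DifferentiableAt ℂ (fun s : ℂ => csqrt (s - sb kp θc θx)) s := by
      apply DifferentiableAt.csqrt' (differentiableAt_id.sub (differentiableAt_const _))
      rw [Complex.mem_slitPlane_iff]
      right
      show (s - sb kp θc θx).im ≠ 0
      rw [Complex.sub_im, sb_im kp θc θx hkp]
      have hlt : |s.im| < |Real.sqrt kp * Real.sin ((θc-θx)/2)| := by
        rw [abs_mul, _root_.abs_of_nonneg (Real.sqrt_nonneg kp)]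
        exact hs
      intro h0
      have : s.im = Real.sqrt kp * Real.sin ((θc-θx)/2) := by
        have := sub_eq_zero.mp h0; exact this
      rw [this] at hlt
      exact lt_irrefl _ hlt
    exact ((key1 s hs1).mul hsbd).differentiableWithinAt
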